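/- Let ω ∈ D and ν ∈ D̂ be radial weights. Then there exists γ₀ = γ₀(ω, ν) > 0 such that for every γ ∈ (0, γ₀], the weight ω(r)/ν̂(r)^γ belongs to D, and there exist constants c, C > 0 with c ω̂(r)/ν̂(r)^γ ≤ ∫_r^1 ω(s)/ν̂(s)^γ ds ≤ C ω̂(r)/ν̂(r)^γ for all r ∈ [0,1). -/

import Mathlib

open MeasureTheory

/-- The tail integral of a radial weight. -/
noncomputable def hat (ω : ℝ → ℝ) (r : ℝ) : ℝ := ∫ s in r..1, ω s

/-- The class D̂ of radial weights. -/
def Dhat (ω : ℝ → ℝ) : Prop :=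
  ∃ C > 1, ∀ r ∈ Set.Ico (0:ℝ) 1, hat ω r ≤ C * hat ω ((1 + r) / 2)

/-- The class Ď of radial weights. -/
def Dcheck (ω : ℝ → ℝ) : Prop :=
  ∃ K > 1, ∃ C > 1, ∀ r ∈ Set.Ico (0:ℝ) 1, C * hat ω (1 - (1 - r) / K) ≤ hat ω r

/-- The class D = D̂ ∩ Ď. -/
def Dclass (ω : ℝ → ℝ) : Prop := Dhat ω ∧ Dcheck ω

namespace DProofAux

lemma ae_ne_one : ∀ᵐ x : ℝ ∂volume, x ≠ 1 := by
  rw [MeasureTheory.ae_iff]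
  simpa using measure_singleton (1:ℝ)

variable {ω ν : ℝ → ℝ}

lemma subII (hint : IntervalIntegrable ω volume 0 1) {a b : ℝ}
    (ha : 0 ≤ a) (hab : a ≤ b) (hb : b ≤ 1) : IntervalIntegrable ω volume a b :=
  hint.mono_set (by
    rw [Set.uIcc_of_le hab, Set.uIcc_of_le zero_le_one]
    exact Set.Icc_subset_Icc ha hb)

lemma integral_piece_nonneg (hnn : ∀ r ∈ Set.Ico (0:ℝ) 1, 0 ≤ ω r)
    (hint : IntervalIntegrable ω volume 0 1) {a b : ℝ}
    (ha : 0 ≤ a) (hab : a ≤ b) (hb : b ≤ 1) : 0 ≤ ∫ s in a..b, ω s := by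
  have h0 : (fun _ : ℝ => (0:ℝ)) ≤ᵐ[volume.restrict (Set.Icc a b)] ω := by
    filter_upwards [ae_restrict_mem measurableSet_Icc, ae_restrict_of_ae ae_ne_one]
      with x hx hx1
    exact hnn x ⟨le_trans ha hx.1, lt_of_le_of_ne (le_trans hx.2 hb) hx1⟩
  simpa using intervalIntegral.integral_mono_ae_restrict hab
    intervalIntegrable_const (subII hint ha hab hb) h0

lemma hat_split (hint : IntervalIntegrable ω volume 0 1) {a b : ℝ}
    (ha : 0 ≤ a) (hab : a ≤ b) (hb : b ≤ 1) :
    hat ω a = (∫ s in a..b, ω s) + hat ω b := by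
  rw [hat, hat]
  exact (intervalIntegral.integral_add_adjacent_intervals
    (subII hint ha hab hb) (subII hint (le_trans ha hab) hb le_rfl)).symm

lemma hat_anti (hnn : ∀ r ∈ Set.Ico (0:ℝ) 1, 0 ≤ ω r)
    (hint : IntervalIntegrable ω volume 0 1) {a b : ℝ}
    (ha : 0 ≤ a) (hab : a ≤ b) (hb : b ≤ 1) : hat ω b ≤ hat ω a := by
  have h1 := hat_split hint ha hab hb
  have h2 := integral_piece_nonneg hnn hint ha hab hb
  linarith

lemma hat_contOn (hint : IntervalIntegrable ν volume 0 1) :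
    ContinuousOn (hat ν) (Set.Icc 0 1) := by
  have hInt : IntegrableOn ν (Set.uIcc (0:ℝ) 1) volume := by
    rw [Set.uIcc_of_le zero_le_one, integrableOn_Icc_iff_integrableOn_Ioc]
    exact (intervalIntegrable_iff_integrableOn_Ioc_of_le zero_le_one).mp hint
  have h1 : ContinuousOn (fun x => ∫ s in (0:ℝ)..x, ν s) (Set.Icc 0 1) := by
    have := intervalIntegral.continuousOn_primitive_interval (μ := volume) hInt
    rwa [Set.uIcc_of_le zero_le_one] at this
  have h2 : ContinuousOn (fun x => hat ν 0 - ∫ s in (0:ℝ)..x, ν s) (Set.Icc 0 1) :=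
    continuousOn_const.sub h1
  refine h2.congr ?_
  intro x hx
  have := hat_split hint le_rfl hx.1 hx.2
  simp only [this]
  ring

lemma point_bounds {r A : ℝ} (hr : r ∈ Set.Ico (0:ℝ) 1) (hA : 1 ≤ A) :
    r ≤ 1 - (1 - r) / A ∧ 1 - (1 - r) / A < 1 := by
  have h1r : (0:ℝ) < 1 - r := by linarith [hr.2]
  have hA0 : (0:ℝ) < A := by linarith
  constructor
  · have : (1 - r) / A ≤ 1 - r := div_le_self h1r.le hA
    linarith
  · have : 0 < (1 - r) / A := div_pos h1r hA0
    linarith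

lemma nu_iter (hnn : ∀ r ∈ Set.Ico (0:ℝ) 1, 0 ≤ ν r)
    (hint : IntervalIntegrable ν volume 0 1) {C : ℝ} (hC1 : 1 < C)
    (hC : ∀ r ∈ Set.Ico (0:ℝ) 1, hat ν r ≤ C * hat ν ((1 + r) / 2)) :
    ∀ n : ℕ, ∀ r ∈ Set.Ico (0:ℝ) 1, hat ν r ≤ C ^ n * hat ν (1 - (1 - r) / 2 ^ n) := by
  intro n
  induction n with
  | zero => intro r hr; simp
  | succ n ih =>
    intro r hr
    have h2n : (1:ℝ) ≤ 2 ^ n := one_le_pow₀ (by norm_num)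
    obtain ⟨htr, ht1⟩ := point_bounds hr h2n
    have hmem : 1 - (1 - r) / 2 ^ n ∈ Set.Ico (0:ℝ) 1 := ⟨le_trans hr.1 htr, ht1⟩
    have h1 := ih r hr
    have h2 := hC _ hmem
    have heq : (1 + (1 - (1 - r) / 2 ^ n)) / 2 = 1 - (1 - r) / 2 ^ (n + 1) := by
      rw [pow_succ]
      have : (2:ℝ) ^ n ≠ 0 := by positivity
      field_simp
      ring
    calc hat ν r ≤ C ^ n * hat ν (1 - (1 - r) / 2 ^ n) := h1
      _ ≤ C ^ n * (C * hat ν ((1 + (1 - (1 - r) / 2 ^ n)) / 2)) :=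
          mul_le_mul_of_nonneg_left h2 (pow_nonneg (by linarith) n)
      _ = C ^ (n + 1) * hat ν (1 - (1 - r) / 2 ^ (n + 1)) := by rw [heq, pow_succ]; ring

lemma om_iter (hnn : ∀ r ∈ Set.Ico (0:ℝ) 1, 0 ≤ ω r)
    (hint : IntervalIntegrable ω volume 0 1) {K C : ℝ} (hK1 : 1 < K) (hC1 : 1 < C)
    (hC : ∀ r ∈ Set.Ico (0:ℝ) 1, C * hat ω (1 - (1 - r) / K) ≤ hat ω r) :
    ∀ n : ℕ, ∀ r ∈ Set.Ico (0:ℝ) 1, C ^ n * hat ω (1 - (1 - r) / K ^ n) ≤ hat ω r := by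
  intro n
  induction n with
  | zero => intro r hr; simp
  | succ n ih =>
    intro r hr
    have hKn : (1:ℝ) ≤ K ^ n := one_le_pow₀ (by linarith)
    obtain ⟨htr, ht1⟩ := point_bounds hr hKn
    have hmem : 1 - (1 - r) / K ^ n ∈ Set.Ico (0:ℝ) 1 := ⟨le_trans hr.1 htr, ht1⟩
    have h2 := hC _ hmem
    have heq : 1 - (1 - (1 - (1 - r) / K ^ n)) / K = 1 - (1 - r) / K ^ (n + 1) := by
      rw [pow_succ]
      have h1 : (K:ℝ) ^ n ≠ 0 := by positivity
      have h2 : (K:ℝ) ≠ 0 := by positivity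
      field_simp
      ring
    calc C ^ (n + 1) * hat ω (1 - (1 - r) / K ^ (n + 1))
        = C ^ n * (C * hat ω (1 - (1 - (1 - (1 - r) / K ^ n)) / K)) := by rw [heq, pow_succ]; ring
      _ ≤ C ^ n * hat ω (1 - (1 - r) / K ^ n) :=
          mul_le_mul_of_nonneg_left h2 (pow_nonneg (by linarith) n)
      _ ≤ hat ω r := ih r hr

lemma rpow_pow {x : ℝ} (hx : 0 ≤ x) (γ : ℝ) (n : ℕ) : (x ^ n) ^ γ = (x ^ γ) ^ n := by
  rw [← Real.rpow_natCast x n, ← Real.rpow_mul hx, mul_comm, Real.rpow_mul hx,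
    Real.rpow_natCast]

lemma nu_comp (hnn : ∀ r ∈ Set.Ico (0:ℝ) 1, 0 ≤ ν r)
    (hint : IntervalIntegrable ν volume 0 1) {Cν : ℝ} (hCν1 : 1 < Cν)
    (hCν : ∀ r ∈ Set.Ico (0:ℝ) 1, hat ν r ≤ Cν * hat ν ((1 + r) / 2))
    {K : ℝ} (hK1 : 1 < K) {L : ℕ} (hKL : K ≤ 2 ^ L) :
    ∀ j : ℕ, ∀ r ∈ Set.Ico (0:ℝ) 1,
      hat ν r ≤ (Cν ^ L) ^ j * hat ν (1 - (1 - r) / K ^ j) := by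
  intro j r hr
  have h1 := nu_iter hnn hint hCν1 hCν (j * L) r hr
  have hKj : K ^ j ≤ 2 ^ (j * L) := by
    calc K ^ j ≤ (2 ^ L) ^ j := pow_le_pow_left₀ (by linarith) hKL j
      _ = 2 ^ (j * L) := by rw [← pow_mul, mul_comm]
  have hKj1 : (1:ℝ) ≤ K ^ j := one_le_pow₀ (by linarith)
  have h2Lj1 : (1:ℝ) ≤ 2 ^ (j * L) := one_le_pow₀ (by norm_num)
  have h1r : (0:ℝ) < 1 - r := by linarith [hr.2]
  have hpt : 1 - (1 - r) / K ^ j ≤ 1 - (1 - r) / 2 ^ (j * L) := by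
    have : (1 - r) / 2 ^ (j * L) ≤ (1 - r) / K ^ j := by
      apply div_le_div_of_nonneg_left h1r.le (by linarith) hKj
    linarith
  obtain ⟨htr, ht1⟩ := point_bounds hr hKj1
  obtain ⟨_, ht1'⟩ := point_bounds hr h2Lj1
  have hanti := hat_anti hnn hint (le_trans hr.1 htr) hpt (le_of_lt ht1')
  calc hat ν r ≤ Cν ^ (j * L) * hat ν (1 - (1 - r) / 2 ^ (j * L)) := h1
    _ ≤ Cν ^ (j * L) * hat ν (1 - (1 - r) / K ^ j) :=
        mul_le_mul_of_nonneg_left hanti (pow_nonneg (by linarith) _)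
    _ = (Cν ^ L) ^ j * hat ν (1 - (1 - r) / K ^ j) := by
        rw [← pow_mul, mul_comm j L]

end DProofAux

open DProofAux in
/-- The main quantitative lemma. -/
lemma key_lemma (ω ν : ℝ → ℝ)
    (hω_nonneg : ∀ r ∈ Set.Ico (0:ℝ) 1, 0 ≤ ω r)
    (hν_nonneg : ∀ r ∈ Set.Ico (0:ℝ) 1, 0 ≤ ν r)
    (hω_int : IntervalIntegrable ω volume 0 1)
    (hν_int : IntervalIntegrable ν volume 0 1)
    (hω_pos : ∀ r ∈ Set.Ico (0:ℝ) 1, 0 < hat ω r)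
    (hν_pos : ∀ r ∈ Set.Ico (0:ℝ) 1, 0 < hat ν r)
    {Cν : ℝ} (hCν1 : 1 < Cν)
    (hCν : ∀ r ∈ Set.Ico (0:ℝ) 1, hat ν r ≤ Cν * hat ν ((1 + r) / 2))
    {K Cc : ℝ} (hK1 : 1 < K) (hCc1 : 1 < Cc)
    (hCc : ∀ r ∈ Set.Ico (0:ℝ) 1, Cc * hat ω (1 - (1 - r) / K) ≤ hat ω r)
    {L : ℕ} (hKL : K ≤ 2 ^ L)
    {γ : ℝ} (hγ : 0 < γ) (hbD : (Cν ^ L) ^ γ ≤ Real.sqrt Cc) :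
    ∀ r ∈ Set.Ico (0:ℝ) 1,
      IntervalIntegrable (fun s => ω s / hat ν s ^ γ) volume r 1 ∧
      hat ω r / hat ν r ^ γ ≤ (∫ s in r..1, ω s / hat ν s ^ γ) ∧
      (∫ s in r..1, ω s / hat ν s ^ γ) ≤
        (Real.sqrt Cc / (1 - 1 / Real.sqrt Cc)) * (hat ω r / hat ν r ^ γ) := by
  set D := Real.sqrt Cc with hD
  have hD1 : 1 < D := by
    have := Real.sqrt_lt_sqrt (by norm_num) hCc1
    rwa [Real.sqrt_one] at this
  have hD0 : (0:ℝ) < D := by linarith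
  have hDD : D * D = Cc := Real.mul_self_sqrt (by linarith)
  set b := (Cν ^ L) ^ γ with hb
  have hB0 : (0:ℝ) < Cν ^ L := pow_pos (by linarith) L
  have hB1 : (1:ℝ) ≤ Cν ^ L := one_le_pow₀ (by linarith)
  have hb1 : (1:ℝ) ≤ b := Real.one_le_rpow hB1 hγ.le
  have hb0 : (0:ℝ) < b := by linarith
  set q := 1 / D with hq
  have hq0 : (0:ℝ) < q := by positivity
  have hq1 : q < 1 := by rw [hq]; rw [div_lt_one hD0]; exact hD1
  have h1q : (0:ℝ) < 1 - q := by linarith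
  -- nonnegativity of the new weight
  have Wnn : ∀ s ∈ Set.Ico (0:ℝ) 1, 0 ≤ ω s / hat ν s ^ γ := by
    intro s hs
    exact div_nonneg (hω_nonneg s hs) (Real.rpow_pos_of_pos (hν_pos s hs) γ).le
  -- integrability on compact subintervals of [0,1)
  have Wint : ∀ a c : ℝ, 0 ≤ a → a ≤ c → c < 1 →
      IntervalIntegrable (fun s => ω s / hat ν s ^ γ) volume a c := by
    intro a c ha hac hc
    have hsub : Set.Icc a c ⊆ Set.Icc (0:ℝ) 1 := Set.Icc_subset_Icc ha hc.le
    have hmem : ∀ s ∈ Set.Icc a c, s ∈ Set.Ico (0:ℝ) 1 := fun s hs =>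
      ⟨le_trans ha hs.1, lt_of_le_of_lt hs.2 hc⟩
    have hcont : ContinuousOn (fun s => (hat ν s ^ γ)⁻¹) (Set.uIcc a c) := by
      rw [Set.uIcc_of_le hac]
      refine ContinuousOn.inv₀ (ContinuousOn.rpow_const ((hat_contOn hν_int).mono hsub) ?_) ?_
      · intro s hs; exact Or.inl (ne_of_gt (hν_pos s (hmem s hs)))
      · intro s hs; exact ne_of_gt (Real.rpow_pos_of_pos (hν_pos s (hmem s hs)) γ)
    have := (subII hω_int ha hac hc.le).mul_continuousOn hcont
    simpa [div_eq_mul_inv] using this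
  intro r hr
  obtain ⟨hr0, h1r⟩ := hr
  have h1rp : (0:ℝ) < 1 - r := by linarith
  set R : ℕ → ℝ := fun j => 1 - (1 - r) / K ^ j with hR
  have hRr : ∀ j, r ≤ R j := fun j => (point_bounds ⟨hr0, h1r⟩ (one_le_pow₀ hK1.le)).1
  have hR1 : ∀ j, R j < 1 := fun j => (point_bounds ⟨hr0, h1r⟩ (one_le_pow₀ hK1.le)).2
  have hR0 : ∀ j, 0 ≤ R j := fun j => le_trans hr0 (hRr j)
  have hRmem : ∀ j, R j ∈ Set.Ico (0:ℝ) 1 := fun j => ⟨hR0 j, hR1 j⟩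
  have hRmono : ∀ j, R j ≤ R (j + 1) := by
    intro j
    have h1 : (1 - r) / K ^ (j + 1) ≤ (1 - r) / K ^ j := by
      apply div_le_div_of_nonneg_left h1rp.le (pow_pos (by linarith) j)
      exact pow_le_pow_right₀ (by linarith) (Nat.le_succ j)
    simp only [hR]
    linarith
  set X := hat ω r / hat ν r ^ γ with hX
  have hνrγ : (0:ℝ) < hat ν r ^ γ := Real.rpow_pos_of_pos (hν_pos r ⟨hr0, h1r⟩) γ
  have hX0 : (0:ℝ) < X := div_pos (hω_pos r ⟨hr0, h1r⟩) hνrγ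
  -- comparison of hat ν at r and at R j
  have hνr_le : ∀ j : ℕ, hat ν r ^ γ ≤ b ^ j * hat ν (R j) ^ γ := by
    intro j
    have h := nu_comp hν_nonneg hν_int hCν1 hCν hK1 hKL j r ⟨hr0, h1r⟩
    have h2 := Real.rpow_le_rpow (hν_pos r ⟨hr0, h1r⟩).le h hγ.le
    rwa [Real.mul_rpow (pow_nonneg hB0.le j) (hν_pos _ (hRmem j)).le,
      rpow_pow hB0.le γ j] at h2
  -- the piece estimate
  have hpiece : ∀ j : ℕ, (∫ s in R j..R (j+1), ω s / hat ν s ^ γ) ≤ D * q ^ j * X := by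
    intro j
    have hRγpos : (0:ℝ) < hat ν (R (j+1)) ^ γ :=
      Real.rpow_pos_of_pos (hν_pos _ (hRmem (j+1))) γ
    have hptw : ∀ s ∈ Set.Icc (R j) (R (j+1)),
        ω s / hat ν s ^ γ ≤ ω s * (b ^ (j+1) / hat ν r ^ γ) := by
      intro s hs
      have hs01 : s ∈ Set.Ico (0:ℝ) 1 :=
        ⟨le_trans (hR0 j) hs.1, lt_of_le_of_lt hs.2 (hR1 (j+1))⟩
      have hνs : 0 < hat ν s := hν_pos s hs01
      have h1 : hat ν (R (j+1)) ≤ hat ν s :=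
        hat_anti hν_nonneg hν_int hs01.1 hs.2 (hR1 (j+1)).le
      have hsγ : hat ν (R (j+1)) ^ γ ≤ hat ν s ^ γ :=
        Real.rpow_le_rpow (hν_pos _ (hRmem (j+1))).le h1 hγ.le
      have hsγpos : 0 < hat ν s ^ γ := Real.rpow_pos_of_pos hνs γ
      have t1 : 1 / hat ν s ^ γ ≤ 1 / hat ν (R (j+1)) ^ γ :=
        one_div_le_one_div_of_le hRγpos hsγ
      have t2 : 1 / hat ν (R (j+1)) ^ γ ≤ b ^ (j+1) / hat ν r ^ γ := by
        rw [div_le_div_iff₀ hRγpos hνrγ, one_mul]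
        exact hνr_le (j+1)
      calc ω s / hat ν s ^ γ = ω s * (1 / hat ν s ^ γ) := by rw [mul_one_div]
        _ ≤ ω s * (b ^ (j+1) / hat ν r ^ γ) :=
            mul_le_mul_of_nonneg_left (t1.trans t2) (hω_nonneg s hs01)
    have hint1 : IntervalIntegrable (fun s => ω s / hat ν s ^ γ) volume (R j) (R (j+1)) :=
      Wint _ _ (hR0 j) (hRmono j) (hR1 (j+1))
    have hint2 : IntervalIntegrable (fun s => ω s * (b ^ (j+1) / hat ν r ^ γ))
        volume (R j) (R (j+1)) :=
      (subII hω_int (hR0 j) (hRmono j) (hR1 (j+1)).le).mul_const _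
    have hmon := intervalIntegral.integral_mono_on (hRmono j) hint1 hint2 hptw
    rw [intervalIntegral.integral_mul_const] at hmon
    have hsplit := hat_split hω_int (hR0 j) (hRmono j) (hR1 (j+1)).le
    have homRj := om_iter hω_nonneg hω_int hK1 hCc1 hCc j r ⟨hr0, h1r⟩
    have hCcj : (0:ℝ) < Cc ^ j := pow_pos (by linarith) j
    have h3 : hat ω (R j) ≤ hat ω r / Cc ^ j := by
      rw [le_div_iff₀ hCcj]
      calc hat ω (R j) * Cc ^ j = Cc ^ j * hat ω (R j) := by ring
        _ ≤ hat ω r := homRj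
    have h4 : 0 ≤ hat ω (R (j+1)) := (hω_pos _ (hRmem (j+1))).le
    have hωpc : (∫ s in R j..R (j+1), ω s) ≤ hat ω r / Cc ^ j := by
      have : (∫ s in R j..R (j+1), ω s) = hat ω (R j) - hat ω (R (j+1)) := by
        linarith [hsplit]
      rw [this]; linarith
    have hfrac : b ^ (j+1) / Cc ^ j ≤ D * q ^ j := by
      rw [div_le_iff₀ hCcj, mul_assoc]
      have hqc : q ^ j * Cc ^ j = D ^ j := by
        rw [← mul_pow]
        congr 1
        rw [hq]
        field_simp
        linarith [hDD]
      rw [hqc]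
      calc b ^ (j+1) = b * b ^ j := by rw [pow_succ]; ring
        _ ≤ D * D ^ j := by
            apply mul_le_mul hbD (pow_le_pow_left₀ hb0.le hbD j) (pow_nonneg hb0.le j) hD0.le
    have hcnn : (0:ℝ) ≤ b ^ (j+1) / hat ν r ^ γ := by positivity
    calc (∫ s in R j..R (j+1), ω s / hat ν s ^ γ)
        ≤ (∫ s in R j..R (j+1), ω s) * (b ^ (j+1) / hat ν r ^ γ) := hmon
      _ ≤ (hat ω r / Cc ^ j) * (b ^ (j+1) / hat ν r ^ γ) :=
          mul_le_mul_of_nonneg_right hωpc hcnn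
      _ = (b ^ (j+1) / Cc ^ j) * X := by rw [hX]; ring
      _ ≤ (D * q ^ j) * X := mul_le_mul_of_nonneg_right hfrac hX0.le
      _ = D * q ^ j * X := by ring
  -- partial sums
  have hpartial : ∀ N : ℕ,
      (∫ s in r..R N, ω s / hat ν s ^ γ) ≤ D * ((1 - q ^ N) / (1 - q)) * X := by
    intro N
    induction N with
    | zero =>
      have hR0eq : R 0 = r := by simp [hR]
      rw [hR0eq]
      simp
    | succ N ihN =>
      have hadd := intervalIntegral.integral_add_adjacent_intervals
        (Wint r (R N) hr0 (hRr N) (hR1 N)) (Wint (R N) (R (N+1)) (hR0 N) (hRmono N) (hR1 (N+1)))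
      have hp := hpiece N
      have halg : D * ((1 - q ^ N) / (1 - q)) * X + D * q ^ N * X
          = D * ((1 - q ^ (N+1)) / (1 - q)) * X := by
        rw [pow_succ]
        field_simp
        ring
      calc (∫ s in r..R (N+1), ω s / hat ν s ^ γ)
          = (∫ s in r..R N, ω s / hat ν s ^ γ) + (∫ s in R N..R (N+1), ω s / hat ν s ^ γ) :=
            hadd.symm
        _ ≤ D * ((1 - q ^ N) / (1 - q)) * X + D * q ^ N * X := add_le_add ihN hp
        _ = D * ((1 - q ^ (N+1)) / (1 - q)) * X := halg
  -- uniform bound for all t < 1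
  have huni : ∀ t : ℝ, r ≤ t → t < 1 →
      (∫ s in r..t, ω s / hat ν s ^ γ) ≤ (D / (1 - q)) * X := by
    intro t hrt ht1
    obtain ⟨N, hN⟩ := pow_unbounded_of_one_lt ((1 - r) / (1 - t)) hK1
    have h1t : (0:ℝ) < 1 - t := by linarith
    have hKN : (0:ℝ) < K ^ N := pow_pos (by linarith) N
    have htR : t ≤ R N := by
      rw [div_lt_iff₀ h1t] at hN
      have : (1 - r) / K ^ N ≤ 1 - t := by
        rw [div_le_iff₀ hKN]
        nlinarith
      simp only [hR]
      linarith
    have hsplit2 := intervalIntegral.integral_add_adjacent_intervals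
      (Wint r t hr0 hrt ht1) (Wint t (R N) (by linarith) htR (hR1 N))
    have hnn2 : 0 ≤ ∫ s in t..R N, ω s / hat ν s ^ γ := by
      apply intervalIntegral.integral_nonneg htR
      intro s hs
      exact Wnn s ⟨le_trans (by linarith) hs.1, lt_of_le_of_lt hs.2 (hR1 N)⟩
    have hpN := hpartial N
    have hbound : D * ((1 - q ^ N) / (1 - q)) * X ≤ (D / (1 - q)) * X := by
      have hqN : (0:ℝ) < q ^ N := pow_pos hq0 N
      have h5 : (1 - q ^ N) / (1 - q) ≤ 1 / (1 - q) := by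
        apply div_le_div_of_nonneg_right ?_ h1q.le
        · linarith
      calc D * ((1 - q ^ N) / (1 - q)) * X ≤ D * (1 / (1 - q)) * X := by
            apply mul_le_mul_of_nonneg_right (mul_le_mul_of_nonneg_left h5 hD0.le) hX0.le
        _ = (D / (1 - q)) * X := by ring
    linarith
  -- tendsto of R to 1
  have hRtend : Filter.Tendsto R Filter.atTop (nhds 1) := by
    have h1 : Filter.Tendsto (fun j : ℕ => (K⁻¹) ^ j) Filter.atTop (nhds 0) :=
      tendsto_pow_atTop_nhds_zero_of_lt_one (by positivity) (inv_lt_one_of_one_lt₀ hK1)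
    have h2 : Filter.Tendsto (fun j : ℕ => 1 - (1 - r) * (K⁻¹) ^ j) Filter.atTop
        (nhds (1 - (1 - r) * 0)) :=
      Filter.Tendsto.const_sub _ (Filter.Tendsto.const_mul _ h1)
    simp only [mul_zero, sub_zero] at h2
    convert h2 using 2 with j
    simp only [hR]
    rw [inv_pow, div_eq_mul_inv]
  -- integrability on (r, 1]
  have hIoc : IntegrableOn (fun s => ω s / hat ν s ^ γ) (Set.Ioc r 1) volume := by
    apply MeasureTheory.integrableOn_Ioc_of_intervalIntegral_norm_bounded_right
      (fun i => (Wint r (R i) hr0 (hRr i) (hR1 i)).1) hRtend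
    refine Filter.Eventually.of_forall (fun i => ?_)
    have heq : Set.EqOn (fun x => ‖ω x / hat ν x ^ γ‖) (fun x => ω x / hat ν x ^ γ)
        (Set.Ioc r (R i)) := by
      intro x hx
      exact Real.norm_of_nonneg (Wnn x ⟨le_trans hr0 hx.1.le, lt_of_le_of_lt hx.2 (hR1 i)⟩)
    rw [setIntegral_congr_fun measurableSet_Ioc heq,
      ← intervalIntegral.integral_of_le (hRr i)]
    exact huni (R i) (hRr i) (hR1 i)
  have hII1 : IntervalIntegrable (fun s => ω s / hat ν s ^ γ) volume r 1 := by
    constructor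
    · exact hIoc
    · rw [Set.Ioc_eq_empty (by push_neg; linarith)]
      exact integrableOn_empty
  refine ⟨hII1, ?_, ?_⟩
  · -- lower bound
    have hcmp : (fun s => ω s / hat ν r ^ γ) ≤ᵐ[volume.restrict (Set.Icc r 1)]
        (fun s => ω s / hat ν s ^ γ) := by
      filter_upwards [ae_restrict_mem measurableSet_Icc, ae_restrict_of_ae ae_ne_one]
        with s hs hs1
      have hs01 : s ∈ Set.Ico (0:ℝ) 1 := ⟨le_trans hr0 hs.1, lt_of_le_of_ne hs.2 hs1⟩
      have h1 : hat ν s ≤ hat ν r := hat_anti hν_nonneg hν_int hr0 hs.1 hs.2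
      have h2 : hat ν s ^ γ ≤ hat ν r ^ γ :=
        Real.rpow_le_rpow (hν_pos s hs01).le h1 hγ.le
      exact div_le_div_of_nonneg_left (hω_nonneg s hs01)
        (Real.rpow_pos_of_pos (hν_pos s hs01) γ) h2
    have hi1 : IntervalIntegrable (fun s => ω s / hat ν r ^ γ) volume r 1 :=
      (subII hω_int hr0 h1r.le le_rfl).div_const _
    have := intervalIntegral.integral_mono_ae_restrict h1r.le hi1 hII1 hcmp
    rwa [intervalIntegral.integral_div] at this
  · -- upper bound
    have hIcc : IntegrableOn (fun s => ω s / hat ν s ^ γ) (Set.uIcc r 1) volume := by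
      rw [Set.uIcc_of_le h1r.le, integrableOn_Icc_iff_integrableOn_Ioc]
      exact hIoc
    have hF : ContinuousOn (fun t => ∫ s in r..t, ω s / hat ν s ^ γ) (Set.Icc r 1) := by
      have := intervalIntegral.continuousOn_primitive_interval (μ := volume) hIcc
      rwa [Set.uIcc_of_le h1r.le] at this
    have h1mem : (1:ℝ) ∈ Set.Icc r 1 := ⟨h1r.le, le_rfl⟩
    haveI hNB : (nhdsWithin (1:ℝ) (Set.Ico r 1)).NeBot := by
      rw [← mem_closure_iff_nhdsWithin_neBot, closure_Ico (ne_of_lt h1r)]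
      exact ⟨h1r.le, le_rfl⟩
    have hTend : Filter.Tendsto (fun t => ∫ s in r..t, ω s / hat ν s ^ γ)
        (nhdsWithin 1 (Set.Ico r 1)) (nhds (∫ s in r..1, ω s / hat ν s ^ γ)) :=
      ((hF 1 h1mem).tendsto).mono_left (nhdsWithin_mono 1 Set.Ico_subset_Icc_self)
    have hev : ∀ᶠ t in nhdsWithin (1:ℝ) (Set.Ico r 1),
        (∫ s in r..t, ω s / hat ν s ^ γ) ≤ (D / (1 - q)) * X :=
      Filter.eventually_of_mem self_mem_nhdsWithin (fun t ht => huni t ht.1 ht.2)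
    exact le_of_tendsto hTend hev

set_option maxHeartbeats 1000000 in
theorem div_hat_pow_mem_Dclass (ω ν : ℝ → ℝ)
    (hω_nonneg : ∀ r ∈ Set.Ico (0:ℝ) 1, 0 ≤ ω r)
    (hν_nonneg : ∀ r ∈ Set.Ico (0:ℝ) 1, 0 ≤ ν r)
    (hω_int : IntervalIntegrable ω volume 0 1)
    (hν_int : IntervalIntegrable ν volume 0 1)
    (hω_pos : ∀ r ∈ Set.Ico (0:ℝ) 1, 0 < hat ω r)
    (hν_pos : ∀ r ∈ Set.Ico (0:ℝ) 1, 0 < hat ν r)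
    (hω : Dclass ω) (hν : Dhat ν) :
    ∃ γ₀ > 0, ∀ γ ∈ Set.Ioc (0:ℝ) γ₀,
      Dclass (fun r => ω r / hat ν r ^ γ) ∧
      ∃ c > 0, ∃ C > 0, ∀ r ∈ Set.Ico (0:ℝ) 1,
        c * (hat ω r / hat ν r ^ γ) ≤ (∫ s in r..1, ω s / hat ν s ^ γ) ∧
        (∫ s in r..1, ω s / hat ν s ^ γ) ≤ C * (hat ω r / hat ν r ^ γ) := by
  obtain ⟨⟨Cw, hCw1, hCw⟩, K, hK1, Cc, hCc1, hCc⟩ := hω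
  obtain ⟨Cν, hCν1, hCν⟩ := hν
  obtain ⟨L, hKL'⟩ := pow_unbounded_of_one_lt K (by norm_num : (1:ℝ) < 2)
  have hKL : K ≤ 2 ^ L := hKL'.le
  have hL0 : L ≠ 0 := by
    intro h
    rw [h] at hKL'
    simp at hKL'
    linarith
  have hB1 : (1:ℝ) < Cν ^ L := one_lt_pow₀ hCν1 hL0
  set D := Real.sqrt Cc with hD
  have hD1 : 1 < D := by
    have := Real.sqrt_lt_sqrt (by norm_num) hCc1
    rwa [Real.sqrt_one] at this
  have hD0 : (0:ℝ) < D := by linarith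
  set γ₀ := Real.log D / Real.log (Cν ^ L) with hγ₀def
  have hγ₀ : 0 < γ₀ := div_pos (Real.log_pos hD1) (Real.log_pos hB1)
  refine ⟨γ₀, hγ₀, ?_⟩
  rintro γ ⟨hγ0, hγle⟩
  have hbD : (Cν ^ L) ^ γ ≤ D := by
    have h1 : (Cν ^ L) ^ γ ≤ (Cν ^ L) ^ γ₀ :=
      Real.rpow_le_rpow_of_exponent_le hB1.le hγle
    have h2 : (Cν ^ L) ^ γ₀ = D := by
      rw [Real.rpow_def_of_pos (by linarith)]
      have hlogB : Real.log (Cν ^ L) ≠ 0 := ne_of_gt (Real.log_pos hB1)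
      rw [show Real.log (Cν ^ L) * γ₀ = Real.log D by
        rw [hγ₀def, mul_comm, div_mul_cancel₀ _ hlogB]]
      exact Real.exp_log hD0
    linarith
  have hkey := key_lemma ω ν hω_nonneg hν_nonneg hω_int hν_int hω_pos hν_pos hCν1 hCν
    hK1 hCc1 hCc hKL hγ0 hbD
  set M := D / (1 - 1 / D) with hM
  have h1D : (0:ℝ) < 1 - 1 / D := by
    have : 1 / D < 1 := by rw [div_lt_one hD0]; exact hD1
    linarith
  have hM1 : 1 < M := by
    rw [hM, lt_div_iff₀ h1D]
    have : (0:ℝ) < 1 / D := by positivity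
    linarith
  have hM0 : (0:ℝ) < M := by linarith
  have hXpos : ∀ r ∈ Set.Ico (0:ℝ) 1, 0 < hat ω r / hat ν r ^ γ := by
    intro r hrm
    exact div_pos (hω_pos r hrm) (Real.rpow_pos_of_pos (hν_pos r hrm) γ)
  refine ⟨⟨?_, ?_⟩, 1, one_pos, M, hM0, fun r hrm => ?_⟩
  · -- Dhat of the new weight
    refine ⟨M * Cw, by nlinarith, fun r hrm => ?_⟩
    obtain ⟨hr0, h1r⟩ := hrm
    have hmmem : (1 + r) / 2 ∈ Set.Ico (0:ℝ) 1 := ⟨by linarith, by linarith⟩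
    obtain ⟨_, hlow_m, _⟩ := hkey ((1 + r) / 2) hmmem
    obtain ⟨_, _, hub_r⟩ := hkey r ⟨hr0, h1r⟩
    have h1 : hat ω r ≤ Cw * hat ω ((1 + r) / 2) := hCw r ⟨hr0, h1r⟩
    have h2 : hat ν ((1 + r) / 2) ≤ hat ν r :=
      DProofAux.hat_anti hν_nonneg hν_int hr0 (by linarith) hmmem.2.le
    have hνmγ : (0:ℝ) < hat ν ((1 + r) / 2) ^ γ :=
      Real.rpow_pos_of_pos (hν_pos _ hmmem) γ
    have hνrγ : (0:ℝ) < hat ν r ^ γ :=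
      Real.rpow_pos_of_pos (hν_pos r ⟨hr0, h1r⟩) γ
    have h2γ : hat ν ((1 + r) / 2) ^ γ ≤ hat ν r ^ γ :=
      Real.rpow_le_rpow (hν_pos _ hmmem).le h2 hγ0.le
    have h3 : hat ω r / hat ν r ^ γ ≤ Cw * (hat ω ((1 + r) / 2) / hat ν ((1 + r) / 2) ^ γ) := by
      rw [mul_div_assoc']
      apply div_le_div₀ (mul_nonneg (by linarith) (hω_pos _ hmmem).le) h1 hνmγ h2γ
    have e1 : hat (fun s => ω s / hat ν s ^ γ) r = ∫ s in r..1, ω s / hat ν s ^ γ := by simp only [hat]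
    have e2 : hat (fun s => ω s / hat ν s ^ γ) ((1 + r) / 2)
        = ∫ s in ((1 + r) / 2)..1, ω s / hat ν s ^ γ := by simp only [hat]
    rw [e1, e2]
    calc (∫ s in r..1, ω s / hat ν s ^ γ) ≤ M * (hat ω r / hat ν r ^ γ) := hub_r
      _ ≤ M * (Cw * (hat ω ((1 + r) / 2) / hat ν ((1 + r) / 2) ^ γ)) :=
          mul_le_mul_of_nonneg_left h3 hM0.le
      _ ≤ M * (Cw * (∫ s in ((1 + r) / 2)..1, ω s / hat ν s ^ γ)) := by
          apply mul_le_mul_of_nonneg_left (mul_le_mul_of_nonneg_left hlow_m (by linarith)) hM0.le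
      _ = (M * Cw) * (∫ s in ((1 + r) / 2)..1, ω s / hat ν s ^ γ) := by ring
  · -- Dcheck of the new weight
    obtain ⟨m, hm⟩ := pow_unbounded_of_one_lt (2 * M) hD1
    set n := m + 1 with hn
    have hDn : 2 * M < D ^ n := by
      calc 2 * M < D ^ m := hm
        _ ≤ D ^ n := pow_le_pow_right₀ hD1.le (Nat.le_succ m)
    refine ⟨K ^ n, one_lt_pow₀ hK1 (Nat.succ_ne_zero m), 2, one_lt_two, fun r hrm => ?_⟩
    obtain ⟨hr0, h1r⟩ := hrm
    have hKn1 : (1:ℝ) ≤ K ^ n := one_le_pow₀ hK1.le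
    obtain ⟨hτr, hτ1⟩ := DProofAux.point_bounds ⟨hr0, h1r⟩ hKn1
    set τ := 1 - (1 - r) / K ^ n with hτ
    have hτmem : τ ∈ Set.Ico (0:ℝ) 1 := ⟨le_trans hr0 hτr, hτ1⟩
    obtain ⟨_, hlow_r, _⟩ := hkey r ⟨hr0, h1r⟩
    obtain ⟨_, _, hub_τ⟩ := hkey τ hτmem
    have h1 := DProofAux.om_iter hω_nonneg hω_int hK1 hCc1 hCc n r ⟨hr0, h1r⟩
    have h2 := DProofAux.nu_comp hν_nonneg hν_int hCν1 hCν hK1 hKL n r ⟨hr0, h1r⟩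
    -- positivity facts
    have hντpos : (0:ℝ) < hat ν τ := hν_pos τ hτmem
    have hντγ : (0:ℝ) < hat ν τ ^ γ := Real.rpow_pos_of_pos hντpos γ
    have hνrγ : (0:ℝ) < hat ν r ^ γ :=
      Real.rpow_pos_of_pos (hν_pos r ⟨hr0, h1r⟩) γ
    have hωτpos : (0:ℝ) < hat ω τ := hω_pos τ hτmem
    have hCcn : (0:ℝ) < Cc ^ n := pow_pos (by linarith) n
    -- hat ω τ ≤ hat ω r / Cc ^ n
    have h3 : hat ω τ ≤ hat ω r / Cc ^ n := by
      rw [le_div_iff₀ hCcn]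
      calc hat ω τ * Cc ^ n = Cc ^ n * hat ω τ := by ring
        _ ≤ hat ω r := h1
    -- hat ν r ^ γ ≤ b ^ n * hat ν τ ^ γ where b = (Cν^L)^γ
    have hB0 : (0:ℝ) < Cν ^ L := pow_pos (by linarith) L
    have h4 : hat ν r ^ γ ≤ ((Cν ^ L) ^ γ) ^ n * hat ν τ ^ γ := by
      have h5 := Real.rpow_le_rpow (hν_pos r ⟨hr0, h1r⟩).le h2 hγ0.le
      rwa [Real.mul_rpow (pow_nonneg hB0.le n) hντpos.le,
        DProofAux.rpow_pow hB0.le γ n] at h5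
    have hb0 : (0:ℝ) < (Cν ^ L) ^ γ := Real.rpow_pos_of_pos hB0 γ
    -- 1 / hat ν τ ^ γ ≤ b^n / hat ν r ^ γ
    have h6 : 1 / hat ν τ ^ γ ≤ ((Cν ^ L) ^ γ) ^ n / hat ν r ^ γ := by
      rw [div_le_div_iff₀ hντγ hνrγ, one_mul]
      exact h4
    -- hat W τ ≤ M * (hat ω τ / hat ν τ ^ γ)
    have h7 : hat ω τ / hat ν τ ^ γ ≤ ((Cν ^ L) ^ γ) ^ n / Cc ^ n * (hat ω r / hat ν r ^ γ) := by
      calc hat ω τ / hat ν τ ^ γ = hat ω τ * (1 / hat ν τ ^ γ) := by rw [mul_one_div]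
        _ ≤ (hat ω r / Cc ^ n) * (((Cν ^ L) ^ γ) ^ n / hat ν r ^ γ) := by
            apply mul_le_mul h3 h6 (div_nonneg zero_le_one hντγ.le) (div_nonneg (hω_pos r ⟨hr0, h1r⟩).le hCcn.le)
        _ = ((Cν ^ L) ^ γ) ^ n / Cc ^ n * (hat ω r / hat ν r ^ γ) := by ring
    have hfr : ((Cν ^ L) ^ γ) ^ n / Cc ^ n ≤ (1 / D) ^ n := by
      have hDD : D * D = Cc := Real.mul_self_sqrt (by linarith)
      have h8 : ((Cν ^ L) ^ γ) ^ n ≤ D ^ n := pow_le_pow_left₀ hb0.le hbD n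
      rw [div_le_iff₀ hCcn]
      calc ((Cν ^ L) ^ γ) ^ n ≤ D ^ n := h8
        _ = (1 / D) ^ n * Cc ^ n := by
            rw [← mul_pow]
            congr 1
            field_simp
            linarith [hDD]
    have hXr : (0:ℝ) < hat ω r / hat ν r ^ γ := hXpos r ⟨hr0, h1r⟩
    have h9 : hat ω τ / hat ν τ ^ γ ≤ (1 / D) ^ n * (hat ω r / hat ν r ^ γ) := by
      calc hat ω τ / hat ν τ ^ γ
          ≤ ((Cν ^ L) ^ γ) ^ n / Cc ^ n * (hat ω r / hat ν r ^ γ) := h7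
        _ ≤ (1 / D) ^ n * (hat ω r / hat ν r ^ γ) :=
            mul_le_mul_of_nonneg_right hfr hXr.le
    have e1 : hat (fun s => ω s / hat ν s ^ γ) r = ∫ s in r..1, ω s / hat ν s ^ γ := by simp only [hat]
    have e2 : hat (fun s => ω s / hat ν s ^ γ) (1 - (1 - r) / K ^ n)
        = ∫ s in τ..1, ω s / hat ν s ^ γ := by simp only [hat, hτ]
    rw [e1, e2]
    have hDn0 : (0:ℝ) < D ^ n := pow_pos hD0 n
    have h10 : 2 * (M * ((1 / D) ^ n * (hat ω r / hat ν r ^ γ))) ≤ hat ω r / hat ν r ^ γ := by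
      have h11 : (1 / D) ^ n = 1 / D ^ n := by rw [one_div, one_div, inv_pow]
      rw [h11]
      rw [show (2 : ℝ) * (M * (1 / D ^ n * (hat ω r / hat ν r ^ γ)))
        = (2 * M / D ^ n) * (hat ω r / hat ν r ^ γ) by ring]
      have h12 : 2 * M / D ^ n ≤ 1 := by
        rw [div_le_one hDn0]
        linarith
      nlinarith
    calc 2 * (∫ s in τ..1, ω s / hat ν s ^ γ)
        ≤ 2 * (M * (hat ω τ / hat ν τ ^ γ)) := by linarith [hub_τ]
      _ ≤ 2 * (M * ((1 / D) ^ n * (hat ω r / hat ν r ^ γ))) := by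
          have := mul_le_mul_of_nonneg_left h9 hM0.le
          linarith
      _ ≤ hat ω r / hat ν r ^ γ := h10
      _ ≤ ∫ s in r..1, ω s / hat ν s ^ γ := hlow_r
  · -- the two-sided estimate
    obtain ⟨_, hlow, hub⟩ := hkey r hrm
    exact ⟨by rw [one_mul]; exact hlow, hub⟩
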